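/- Let i, k ≥ 3 with r = ⌊(F_i − 1)/F_k⌋ ≥ 1. Then n_1(F_i, F_{i+2}, F_{i+k}) = ((F_i + 2·F_k − 1)·F_{i+2} − F_i + 1)/2 − (r·F_i − ((r−1)(r+2)/2)·F_k)·F_{k−2}. -/

import Mathlib

set_option linter.unusedSectionVars false

open Finset

/-- Number of representations of `n` as a nonnegative integer combination of `a`, `b`, `c`. -/
noncomputable def repCount (a b c : ℕ) (n : ℤ) : ℕ :=
  Nat.card {v : ℕ × ℕ × ℕ // (v.1 : ℤ) * a + v.2.1 * b + v.2.2 * c = n}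

/-- `g` is the `p`-Frobenius number of `a, b, c`: the largest integer with at most `p`
representations. -/
def IsPFrob (p a b c : ℕ) (g : ℤ) : Prop :=
  IsGreatest {n : ℤ | repCount a b c n ≤ p} g

/-- Lucas numbers. -/
def lucas : ℕ → ℕ
  | 0 => 2
  | 1 => 1
  | n + 2 => lucas n + lucas (n + 1)

/-! ### Auxiliary card lemmas -/

lemma aux_card_le_one (α : Type*) [Subsingleton α] : Nat.card α ≤ 1 := by
  rcases isEmpty_or_nonempty α with h | h
  · simp
  · exact le_of_eq (Nat.card_eq_one_iff_unique.mpr ⟨‹_›, ‹_›⟩)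

lemma aux_one_lt_card (α : Type*) [Finite α] [Nontrivial α] : 1 < Nat.card α := by
  have := Fintype.ofFinite α
  rw [Nat.card_eq_fintype_card]
  exact Fintype.one_lt_card_iff_nontrivial.mpr ‹_›

/-! ### Division sum lemmas -/

lemma aux_sumW (K : ℕ) (hK : 0 < K) : ∀ u : ℕ, ∑ t ∈ range K, (u + t) / K = u := by
  intro u
  induction u with
  | zero =>
    refine Finset.sum_eq_zero fun t ht => ?_
    exact Nat.div_eq_of_lt (by simpa using (mem_range.mp ht))
  | succ u ih =>
    have h1 : ∑ t ∈ range (K + 1), (u + t) / K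
        = (∑ t ∈ range K, (u + t) / K) + (u + K) / K := Finset.sum_range_succ _ K
    have h2 : ∑ t ∈ range (K + 1), (u + t) / K
        = (∑ t ∈ range K, (u + (t + 1)) / K) + (u + 0) / K := Finset.sum_range_succ' _ K
    have h3 : ∑ t ∈ range K, (u + 1 + t) / K = ∑ t ∈ range K, (u + (t + 1)) / K := by
      refine Finset.sum_congr rfl fun t _ => ?_
      ring_nf
    have h4 : (u + K) / K = u / K + 1 := Nat.add_div_right u hK
    rw [h3]
    simp only [Nat.add_zero] at h2
    rw [ih] at h1
    linarith [h1, h2]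

lemma aux_sumBlock (K N : ℕ) (hK : 0 < K) :
    ∑ t ∈ range (N + K), t / K = (∑ t ∈ range N, t / K) + N := by
  have h1 : (∑ t ∈ range N, (fun t => t / K) t) + ∑ t ∈ Ico N (N + K), (fun t => t / K) t
      = ∑ t ∈ range (N + K), (fun t => t / K) t :=
    Finset.sum_range_add_sum_Ico _ (Nat.le_add_right N K)
  have h2 : ∑ t ∈ Ico N (N + K), (fun t => t / K) t
      = ∑ t ∈ range (N + K - N), (N + t) / K := Finset.sum_Ico_eq_sum_range _ N (N + K)
  rw [Nat.add_sub_cancel_left] at h2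
  have h3 := aux_sumW K hK N
  simp only at h1 h2
  rw [h3] at h2
  linarith [h1, h2]

lemma aux_sumG (K : ℕ) (hK : 0 < K) (s : ℕ) (hs : s ≤ K) :
    ∀ m : ℕ, 2 * (∑ t ∈ range (m * K + s), t / K) + K * m = K * m * m + 2 * m * s := by
  intro m
  induction m with
  | zero =>
    have h0 : ∑ t ∈ range (0 * K + s), t / K = 0 := by
      refine Finset.sum_eq_zero fun t ht => ?_
      have := mem_range.mp ht
      exact Nat.div_eq_of_lt (by omega)
    rw [h0]; ring
  | succ m ih =>
    have hidx : (m + 1) * K + s = (m * K + s) + K := by ring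
    rw [hidx, aux_sumBlock K (m * K + s) hK]
    nlinarith [ih]

/-! ### The general counting theorem -/

section Gen

variable (a b c K e : ℕ)

/-- The value of a pair of coefficients for `b` and `c`. -/
def auxVal (p : ℕ × ℕ) : ℕ := p.1 * b + p.2 * c

/-- The minimal pair in class `t`. -/
def auxP1 (t : ℕ) : ℕ × ℕ := (t - t / K * K, t / K)

/-- The second-minimal pair in class `t`. -/
def auxP2 (t : ℕ) : ℕ × ℕ :=
  if K ≤ t then (t - t / K * K + K, t / K - 1)
  else (t + a - (t + a) / K * K, (t + a) / K)

/-- The threshold: elements of class `t` below `auxM t` have at most one representation. -/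
def auxM (t : ℕ) : ℕ := auxVal b c (auxP2 a K t)

/-- The least residue of `t*b` mod `a`. -/
def auxRho (t : ℕ) : ℕ := t * b % a

/-- Number of elements of class `t` with at most one representation. -/
def auxCnt (t : ℕ) : ℕ := (auxM a b c K t - auxRho a b t) / a

/-- The set of numbers with at most one representation, as an explicit finset. -/
def auxBlocks : Finset ℕ :=
  (range a).biUnion (fun t => (range (auxCnt a b c K t)).image (fun j => auxRho a b t + j * a))

end Gen

/-! ### Hypothesis bundle -/

structure AuxHyp (a b c K e r : ℕ) : Prop where
  hco : Nat.Coprime a b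
  hrel : K * b = e * a + c
  ha2 : 2 ≤ a
  hK2 : 2 ≤ K
  he1 : 1 ≤ e
  h2eK : 2 * e ≤ K
  h2ea : 2 * e ≤ a
  hba : 2 * a ≤ b
  hKa : K < a
  hrd : r = (a - 1) / K

namespace AuxHyp

variable {a b c K e r : ℕ} (H : AuxHyp a b c K e r)

include H

lemma hK0 : 0 < K := by have := H.hK2; omega

lemma ha0 : 0 < a := by have := H.ha2; omega

lemma hb0 : 0 < b := by have := H.hba; have := H.ha2; omega

lemma hc0 : 0 < c := by
  have h := H.hrel
  have h1 : 2 * e * b ≤ K * b := Nat.mul_le_mul_right b H.h2eK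
  have h2 : 2 * a * e ≤ b * e := Nat.mul_le_mul_right e H.hba
  have h3 := H.ha2
  have h4 := H.he1
  nlinarith

lemma hrKa : r * K ≤ a - 1 := by
  rw [H.hrd]; exact Nat.div_mul_le_self _ _

lemma hr1 : 1 ≤ r := by
  rw [H.hrd]
  rw [Nat.one_le_div_iff H.hK0]
  have := H.hKa; omega

lemma haK : a ≤ (r + 1) * K := by
  have h := Nat.div_add_mod (a - 1) K
  have h2 := Nat.mod_lt (a - 1) H.hK0
  have h3 : K * ((a-1)/K) = r * K := by rw [H.hrd]; ring
  have h4 : (r + 1) * K = r * K + K := by ring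
  have := H.ha2
  omega

lemma bound1 : (r + 2) * e < b := by
  have h0 := H.hrKa
  have h5 := H.ha2
  have h1 : r * K + 1 ≤ a := by omega
  have h2 : r * (2 * e) ≤ r * K := Nat.mul_le_mul_left r H.h2eK
  have h3 := H.h2ea
  have h4 := H.hba
  nlinarith

lemma hczint : (c : ℤ) = K * b - e * a := by
  have h : (K : ℤ) * b = e * a + c := by exact_mod_cast H.hrel
  linarith

lemma Ybound (t m : ℕ) : (t + m * a) / K ≤ t / K + m * (r + 1) := by
  have h1 : t + m * a ≤ t + m * (r + 1) * K := by
    have := H.haK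
    nlinarith
  calc (t + m * a) / K ≤ (t + m * (r + 1) * K) / K := Nat.div_le_div_right h1
    _ = t / K + m * (r + 1) := Nat.add_mul_div_right t _ H.hK0

/-- Core value identity: if `p.1 + p.2 * K = t + m * a` then
`val p = t*b + m*a*b - p.2*e*a` over `ℤ`. -/
lemma eqval (p : ℕ × ℕ) (t m : ℕ) (hm : p.1 + p.2 * K = t + m * a) :
    (auxVal b c p : ℤ) = t * b + m * (a * b) - p.2 * (e * a) := by
  have h : (p.1 : ℤ) + p.2 * K = t + m * a := by exact_mod_cast hm
  have hc := H.hczint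
  simp only [auxVal]
  push_cast
  linear_combination b * h + p.2 * hc

lemma auxP1_spec (t : ℕ) : (auxP1 K t).1 + (auxP1 K t).2 * K = t + 0 * a := by
  have := Nat.div_mul_le_self t K
  simp only [auxP1]
  omega

lemma auxP1_val (t : ℕ) : (auxVal b c (auxP1 K t) : ℤ) = t * b - (t / K : ℕ) * (e * a) := by
  have h := H.eqval (auxP1 K t) t 0 (H.auxP1_spec t)
  simpa [auxP1] using h

lemma auxP2_spec (t : ℕ) :
    (auxP2 a K t).1 + (auxP2 a K t).2 * K = t + (if K ≤ t then 0 else 1) * a := by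
  by_cases hKt : K ≤ t
  · have h1 : 1 ≤ t / K := (Nat.one_le_div_iff H.hK0).mpr hKt
    have h2 := Nat.div_mul_le_self t K
    simp only [auxP2, if_pos hKt]
    have h3 : (t / K - 1) * K = t / K * K - 1 * K := Nat.sub_mul _ _ _
    have h4 : 1 * K ≤ t / K * K := Nat.mul_le_mul_right K h1
    omega
  · have h2 := Nat.div_mul_le_self (t + a) K
    simp only [auxP2, if_neg hKt]
    omega

lemma auxM_val (t : ℕ) : (auxM a b c K t : ℤ) =
    if K ≤ t then (t : ℤ) * b - (((t / K : ℕ) : ℤ) - 1) * ((e : ℤ) * a)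
    else (t : ℤ) * b + (a : ℤ) * b - (((t + a) / K : ℕ) : ℤ) * ((e : ℤ) * a) := by
  have h := H.eqval (auxP2 a K t) t _ (H.auxP2_spec t)
  by_cases hKt : K ≤ t
  · have h1 : 1 ≤ t / K := (Nat.one_le_div_iff H.hK0).mpr hKt
    have h5 : (auxP2 a K t).2 = t / K - 1 := by simp [auxP2, if_pos hKt]
    have h2 : ((t / K - 1 : ℕ) : ℤ) = ((t / K : ℕ) : ℤ) - 1 := by
      push_cast [Nat.cast_sub h1]
      ring
    simp only [if_pos hKt] at h ⊢
    rw [auxM, h, h5, h2]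
    push_cast
    ring
  · have h5 : (auxP2 a K t).2 = (t + a) / K := by simp [auxP2, hKt]
    simp only [if_neg hKt] at h ⊢
    rw [auxM, h, h5]
    push_cast
    ring

lemma auxP1_ne_auxP2 (t : ℕ) : auxP1 K t ≠ auxP2 a K t := by
  intro hEq
  have h2 := congrArg Prod.snd hEq
  by_cases hKt : K ≤ t
  · have h1 : 1 ≤ t / K := (Nat.one_le_div_iff H.hK0).mpr hKt
    simp only [auxP1, auxP2, if_pos hKt] at h2
    omega
  · have h1 : 1 ≤ (t + a) / K := by
      rw [Nat.one_le_div_iff H.hK0]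
      have := H.hKa; omega
    simp only [auxP1, auxP2, if_neg hKt] at h2
    have ht : t / K = 0 := Nat.div_eq_of_lt (by omega)
    omega

lemma Ye_lt_b (t : ℕ) (ht : t < K) : (t + a) / K * e < b := by
  have hY := H.Ybound t 1
  have ht0 : t / K = 0 := Nat.div_eq_of_lt ht
  rw [ht0] at hY
  have hY' : (t + a) / K ≤ r + 1 := by simpa using hY
  have h1 : (t + a) / K * e ≤ (r + 1) * e := Nat.mul_le_mul_right e hY'
  have h2 := H.bound1
  have h3 := H.he1
  nlinarith

lemma val_p1_lt_auxM (t : ℕ) : auxVal b c (auxP1 K t) < auxM a b c K t := by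
  have hlt : (auxVal b c (auxP1 K t) : ℤ) < (auxM a b c K t : ℤ) := by
    rw [H.auxP1_val, H.auxM_val]
    by_cases hKt : K ≤ t
    · rw [if_pos hKt]
      have h1 : (1:ℤ) ≤ ((t / K : ℕ) : ℤ) := by
        exact_mod_cast (Nat.one_le_div_iff H.hK0).mpr hKt
      have h2 : (0:ℤ) < (e : ℤ) * a := by
        have h3 := H.he1; have h4 := H.ha2
        have h5 : (1:ℤ) ≤ e := by exact_mod_cast h3
        have h6 : (1:ℤ) ≤ a := by exact_mod_cast (show 1 ≤ a by omega)
        nlinarith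
      nlinarith
    · rw [if_neg hKt]
      have ht0 : t / K = 0 := Nat.div_eq_of_lt (by omega)
      rw [ht0]
      have h1 : (t + a) / K * e < b := H.Ye_lt_b t (by omega)
      have h2 : (((t + a) / K : ℕ) : ℤ) * e < (b : ℤ) := by exact_mod_cast h1
      have h3 : (0:ℤ) < (a:ℤ) := by exact_mod_cast H.ha0
      push_cast
      nlinarith [mul_lt_mul_of_pos_right h2 h3]
  exact_mod_cast hlt

lemma auxM_le_val (t : ℕ) (p : ℕ × ℕ) (m : ℕ)
    (hm : p.1 + p.2 * K = t + m * a) (hne : p ≠ auxP1 K t) :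
    auxM a b c K t ≤ auxVal b c p := by
  have hKi : (0:ℤ) < K := by exact_mod_cast H.hK0
  have hai : (0:ℤ) < a := by exact_mod_cast H.ha0
  have hei : (1:ℤ) ≤ e := by exact_mod_cast H.he1
  have hrei : ((r:ℤ) + 2) * e + 1 ≤ b := by exact_mod_cast H.bound1
  have hval := H.eqval p t m hm
  suffices hZ : (auxM a b c K t : ℤ) ≤ (auxVal b c p : ℤ) by exact_mod_cast hZ
  rw [hval, H.auxM_val]
  rcases Nat.eq_zero_or_pos m with hm0 | hm1
  · -- m = 0 : p is in the first lap, strictly below the minimum index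
    subst hm0
    have hmK : p.2 * K ≤ t := by omega
    have hy : p.2 ≤ t / K := (Nat.le_div_iff_mul_le H.hK0).mpr hmK
    have hyne : p.2 ≠ t / K := by
      intro hEq
      apply hne
      rw [hEq] at hm
      have h2 : p.1 = t - t / K * K := by
        have h3 := Nat.div_mul_le_self t K
        omega
      have h4 : p = (p.1, p.2) := rfl
      rw [h4, h2, hEq]
      rfl
    have hy1 : p.2 + 1 ≤ t / K := by omega
    have hKt : K ≤ t := by
      by_contra hc
      have : t / K = 0 := Nat.div_eq_of_lt (by omega)
      omega
    rw [if_pos hKt]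
    have hyz : (p.2 : ℤ) + 1 ≤ ((t / K : ℕ) : ℤ) := by exact_mod_cast hy1
    set q : ℤ := ((t / K : ℕ) : ℤ) with hqdef
    simp only [Nat.cast_zero, zero_mul, add_zero]
    have h5 : ((p.2 : ℤ) + 1) * ((e:ℤ) * a) ≤ q * ((e:ℤ) * a) :=
      mul_le_mul_of_nonneg_right hyz (by positivity)
    nlinarith
  · -- m ≥ 1
    obtain ⟨w, hw⟩ : ∃ w, m = w + 1 := ⟨m - 1, by omega⟩
    subst hw
    have hmK : p.2 * K ≤ t + (w + 1) * a := by omega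
    have hy : p.2 ≤ (t + (w + 1) * a) / K := (Nat.le_div_iff_mul_le H.hK0).mpr hmK
    have hidx : t + (w + 1) * a = (t + a) + w * a := by ring
    have hy2 : p.2 ≤ (t + a) / K + w * (r + 1) := by
      rw [hidx] at hy
      exact hy.trans (H.Ybound (t + a) w)
    have hYq : (t + a) / K ≤ t / K + (r + 1) := by
      have h6 := H.Ybound t 1
      simpa using h6
    have hy2z : (p.2 : ℤ) ≤ (((t+a)/K : ℕ) : ℤ) + (w:ℤ) * ((r:ℤ) + 1) := by exact_mod_cast hy2
    have hYqz : (((t+a)/K : ℕ) : ℤ) ≤ ((t/K : ℕ) : ℤ) + ((r:ℤ) + 1) := by exact_mod_cast hYq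
    set q : ℤ := ((t / K : ℕ) : ℤ) with hqdef
    set Y : ℤ := (((t+a)/K : ℕ) : ℤ) with hYdef
    have hwz : (0:ℤ) ≤ (w:ℤ) := by positivity
    by_cases hKt : K ≤ t
    · rw [if_pos hKt]
      -- goal : t*b - (q-1)*(e*a) ≤ t*b + (w+1)*(a*b) - p.2*(e*a)
      have h1 : (p.2 : ℤ) ≤ q + ((w:ℤ) + 1) * (r + 1) := by linarith
      have h3 : (p.2 : ℤ) * ((e:ℤ)*a) ≤ (q + ((w:ℤ)+1)*(r+1)) * ((e:ℤ)*a) :=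
        mul_le_mul_of_nonneg_right h1 (by positivity)
      have h4 : ((r:ℤ)+1)*(e:ℤ) ≤ (b:ℤ) - 1 - e := by linarith
      have h5 : ((w:ℤ)+1)*(((r:ℤ)+1)*(e:ℤ)*a) ≤ ((w:ℤ)+1)*(((b:ℤ) - 1 - e)*a) := by
        have h6 := mul_le_mul_of_nonneg_right h4 hai.le
        have h7 : (0:ℤ) ≤ (w:ℤ)+1 := by linarith
        exact mul_le_mul_of_nonneg_left h6 h7
      push_cast
      linarith [h3, h5, mul_nonneg hwz hai.le, mul_nonneg hwz (by positivity : (0:ℤ) ≤ (e:ℤ) * a)]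
    · rw [if_neg hKt]
      -- goal : t*b + a*b - Y*(e*a) ≤ t*b + (w+1)*(a*b) - p.2*(e*a)
      have h3 : (p.2 : ℤ) * ((e:ℤ)*a) ≤ (Y + (w:ℤ)*((r:ℤ)+1)) * ((e:ℤ)*a) :=
        mul_le_mul_of_nonneg_right hy2z (by positivity)
      have h4 : ((r:ℤ)+1)*(e:ℤ) ≤ (b:ℤ) := by linarith
      have h5 : (w:ℤ)*(((r:ℤ)+1)*(e:ℤ)*a) ≤ (w:ℤ)*((b:ℤ)*a) := by
        have h6 := mul_le_mul_of_nonneg_right h4 hai.le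
        exact mul_le_mul_of_nonneg_left h6 hwz
      push_cast
      linarith [h3, h5]

lemma class_ex (n : ℕ) : ∃ t : ℕ, t < a ∧ (a:ℤ) ∣ (n:ℤ) - t * b := by
  obtain ⟨u, v, huv⟩ := H.hco.isCoprime
  have hA : (0:ℤ) < a := by exact_mod_cast H.ha0
  set T : ℤ := (n:ℤ) * v % a with hT
  have h0 : 0 ≤ T := Int.emod_nonneg _ hA.ne'
  have h1 : T < a := Int.emod_lt_of_pos _ hA
  have hTn : ((T.toNat : ℕ) : ℤ) = T := Int.toNat_of_nonneg h0
  refine ⟨T.toNat, ?_, ?_⟩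
  · exact_mod_cast hTn ▸ h1
  · have hdT : (a:ℤ) ∣ (n:ℤ) * v - T := ⟨(n:ℤ) * v / a, by rw [hT, Int.emod_def]; ring⟩
    obtain ⟨d, hdd⟩ := hdT
    refine ⟨(n:ℤ) * u + d * b, ?_⟩
    rw [hTn]
    linear_combination (-(n:ℤ)) * huv + (b:ℤ) * hdd

lemma class_uniq (t t' : ℕ) (ht : t < a) (ht' : t' < a)
    (h : (a:ℤ) ∣ ((t:ℤ) - t') * b) : t = t' := by
  have h2 : (a:ℤ) ∣ (t:ℤ) - t' := H.hco.isCoprime.dvd_of_dvd_mul_right h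
  have h3 : (t:ℤ) - t' = 0 := by
    refine Int.eq_zero_of_abs_lt_dvd h2 ?_
    rw [abs_lt]
    constructor <;> [skip; skip] <;>
      · have h4 : (t:ℤ) < a := by exact_mod_cast ht
        have h5 : (t':ℤ) < a := by exact_mod_cast ht'
        have h6 : (0:ℤ) ≤ t := by positivity
        have h7 : (0:ℤ) ≤ t' := by positivity
        linarith
  have : (t:ℤ) = t' := by linarith
  exact_mod_cast this

lemma finite_reps (n : ℕ) :
    Finite {v : ℕ × ℕ × ℕ // (v.1 : ℤ) * a + v.2.1 * b + v.2.2 * c = (n:ℤ)} := by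
  have hsub : {v : ℕ × ℕ × ℕ | (v.1 : ℤ) * a + v.2.1 * b + v.2.2 * c = (n:ℤ)} ⊆
      Set.Iic n ×ˢ Set.Iic n ×ˢ Set.Iic n := by
    rintro ⟨z, x, y⟩ hv
    simp only [Set.mem_setOf_eq] at hv
    have hn : z * a + x * b + y * c = n := by exact_mod_cast hv
    have h1 : z ≤ z * a := Nat.le_mul_of_pos_right z H.ha0
    have h2 : x ≤ x * b := Nat.le_mul_of_pos_right x H.hb0
    have h3 : y ≤ y * c := Nat.le_mul_of_pos_right y H.hc0
    simp only [Set.mem_prod, Set.mem_Iic]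
    omega
  exact (((Set.finite_Iic n).prod ((Set.finite_Iic n).prod (Set.finite_Iic n))).subset
    hsub).to_subtype

lemma pair_class (n t : ℕ) (ht : t < a) (hd : (a:ℤ) ∣ (n:ℤ) - t * b) (z x y : ℕ)
    (hv : z * a + x * b + y * c = n) :
    ∃ m : ℕ, x + y * K = t + m * a ∧ auxVal b c (x, y) ≤ n := by
  have hcz := H.hczint
  have hval : auxVal b c (x, y) ≤ n := by simp only [auxVal]; omega
  obtain ⟨d1, hd1⟩ := hd
  have hvz : (z:ℤ) * a + x * b + y * c = (n:ℤ) := by exact_mod_cast hv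
  have h2 : (a:ℤ) ∣ ((x:ℤ) + y * K - t) * b := by
    refine ⟨d1 - z + y * e, ?_⟩
    linear_combination hd1 + hvz + (-(y:ℤ)) * hcz
  have h3 : (a:ℤ) ∣ ((x:ℤ) + y * K - t) := H.hco.isCoprime.dvd_of_dvd_mul_right h2
  obtain ⟨mz, hmz⟩ := h3
  have hai : (0:ℤ) < a := by exact_mod_cast H.ha0
  have hm0 : 0 ≤ mz := by
    by_contra hneg
    push_neg at hneg
    have h4 : mz ≤ -1 := by omega
    have h5 : (a:ℤ) * mz ≤ a * (-1) := by
      exact mul_le_mul_of_nonneg_left h4 hai.le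
    have h6 : (0:ℤ) ≤ x := by positivity
    have h7 : (0:ℤ) ≤ (y:ℤ) * K := by positivity
    have h8 : (t:ℤ) < a := by exact_mod_cast ht
    linarith
  refine ⟨mz.toNat, ?_, hval⟩
  have h9 : ((mz.toNat : ℕ) : ℤ) = mz := Int.toNat_of_nonneg hm0
  have h10 : (x:ℤ) + y * K = t + mz.toNat * a := by rw [h9]; linarith
  exact_mod_cast h10

lemma trip_of_pair (n t : ℕ) (hd : (a:ℤ) ∣ (n:ℤ) - t * b) (p : ℕ × ℕ) (m : ℕ)
    (hm : p.1 + p.2 * K = t + m * a) (hval : auxVal b c p ≤ n) :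
    ∃ z : ℕ, (z:ℤ) * a + p.1 * b + p.2 * c = (n:ℤ) := by
  have hvalz := H.eqval p t m hm
  have hval2 : (p.1 : ℤ) * b + p.2 * c = (t:ℤ) * b + m * (a * b) - p.2 * (e * a) := by
    rw [auxVal] at hvalz
    push_cast at hvalz
    linarith
  obtain ⟨d1, hd1⟩ := hd
  have hdvd : (n:ℤ) - ((p.1 : ℤ) * b + p.2 * c) = a * (d1 - m * b + p.2 * e) := by
    linear_combination hd1 - hval2
  have hai : (0:ℤ) < a := by exact_mod_cast H.ha0
  have hge : (0:ℤ) ≤ (n:ℤ) - ((p.1 : ℤ) * b + p.2 * c) := by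
    have h1 : ((auxVal b c p : ℕ) : ℤ) ≤ (n:ℤ) := by exact_mod_cast hval
    rw [auxVal] at h1
    push_cast at h1
    linarith
  have hdge : 0 ≤ d1 - m * b + p.2 * e := by
    by_contra hneg
    push_neg at hneg
    have h4 : d1 - m * b + p.2 * e ≤ -1 := by omega
    have h5 : (a:ℤ) * (d1 - m * b + p.2 * e) ≤ a * (-1) :=
      mul_le_mul_of_nonneg_left h4 hai.le
    linarith
  refine ⟨(d1 - m * b + p.2 * e).toNat, ?_⟩
  have h9 : (((d1 - m * b + p.2 * e).toNat : ℕ) : ℤ) = d1 - m * b + p.2 * e :=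
    Int.toNat_of_nonneg hdge
  rw [h9]
  linarith

lemma threshold (n t : ℕ) (ht : t < a) (hd : (a:ℤ) ∣ (n:ℤ) - t * b) :
    repCount a b c (n:ℤ) ≤ 1 ↔ n < auxM a b c K t := by
  haveI := H.finite_reps n
  constructor
  · intro h
    by_contra hge
    push_neg at hge
    have hv1 : auxVal b c (auxP1 K t) ≤ n := (H.val_p1_lt_auxM t).le.trans hge
    have hv2 : auxVal b c (auxP2 a K t) ≤ n := hge
    obtain ⟨z1, hz1⟩ := H.trip_of_pair n t hd (auxP1 K t) 0 (H.auxP1_spec t) hv1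
    obtain ⟨z2, hz2⟩ := H.trip_of_pair n t hd (auxP2 a K t) _ (H.auxP2_spec t) hv2
    have hnt : Nontrivial {v : ℕ × ℕ × ℕ // (v.1 : ℤ) * a + v.2.1 * b + v.2.2 * c = (n:ℤ)} := by
      refine ⟨⟨(z1, (auxP1 K t).1, (auxP1 K t).2), hz1⟩,
        ⟨(z2, (auxP2 a K t).1, (auxP2 a K t).2), hz2⟩, ?_⟩
      intro hEq
      apply H.auxP1_ne_auxP2 t
      have h1 := congrArg (fun q => q.val.2) hEq
      simp only at h1
      exact Prod.ext (congrArg Prod.fst h1) (congrArg Prod.snd h1)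
    have h2 := aux_one_lt_card
      {v : ℕ × ℕ × ℕ // (v.1 : ℤ) * a + v.2.1 * b + v.2.2 * c = (n:ℤ)}
    rw [repCount] at h
    omega
  · intro hlt
    rw [repCount]
    have hss : Subsingleton {v : ℕ × ℕ × ℕ // (v.1 : ℤ) * a + v.2.1 * b + v.2.2 * c = (n:ℤ)} := by
      constructor
      rintro ⟨⟨z1, x1, y1⟩, h1⟩ ⟨⟨z2, x2, y2⟩, h2⟩
      have hn1 : z1 * a + x1 * b + y1 * c = n := by exact_mod_cast h1
      have hn2 : z2 * a + x2 * b + y2 * c = n := by exact_mod_cast h2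
      obtain ⟨m1, hm1, hval1⟩ := H.pair_class n t ht hd z1 x1 y1 hn1
      obtain ⟨m2, hm2, hval2⟩ := H.pair_class n t ht hd z2 x2 y2 hn2
      have hp1 : (x1, y1) = auxP1 K t := by
        by_contra hne
        have := H.auxM_le_val t (x1, y1) m1 hm1 hne
        omega
      have hp2 : (x2, y2) = auxP1 K t := by
        by_contra hne
        have := H.auxM_le_val t (x2, y2) m2 hm2 hne
        omega
      have hx : x1 = x2 := by
        have := hp1.trans hp2.symm
        exact congrArg Prod.fst this
      have hy : y1 = y2 := by
        have := hp1.trans hp2.symm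
        exact congrArg Prod.snd this
      subst hx; subst hy
      have hz : z1 = z2 := by
        have ha0 := H.ha0
        have : z1 * a = z2 * a := by omega
        exact Nat.eq_of_mul_eq_mul_right ha0 this
      subst hz
      rfl
    exact aux_card_le_one _

lemma auxM_dvd (t : ℕ) : (a:ℤ) ∣ (auxM a b c K t : ℤ) - t * b := by
  have h := H.eqval (auxP2 a K t) t _ (H.auxP2_spec t)
  rw [← auxM] at h
  exact ⟨((if K ≤ t then 0 else 1 : ℕ) : ℤ) * b - ((auxP2 a K t).2 : ℤ) * e,
    by linear_combination h⟩

lemma rho_lt (t : ℕ) : auxRho a b t < a := Nat.mod_lt _ H.ha0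

lemma rho_dvd (t : ℕ) : (a:ℤ) ∣ ((t:ℤ) * b) - auxRho a b t := by
  have h := Nat.div_add_mod (t * b) a
  refine ⟨((t * b / a : ℕ) : ℤ), ?_⟩
  have h2 : ((a * (t * b / a) + t * b % a : ℕ) : ℤ) = ((t * b : ℕ) : ℤ) := by exact_mod_cast h
  push_cast at h2
  rw [auxRho]
  push_cast
  linarith

lemma small_eq (x y : ℕ) (hx : x < a) (hy : y < a) (h : (a:ℤ) ∣ (x:ℤ) - y) : x = y := by
  have h3 : (x:ℤ) - y = 0 := by
    refine Int.eq_zero_of_abs_lt_dvd h ?_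
    rw [abs_lt]
    have h4 : (x:ℤ) < a := by exact_mod_cast hx
    have h5 : (y:ℤ) < a := by exact_mod_cast hy
    have h6 : (0:ℤ) ≤ x := by positivity
    have h7 : (0:ℤ) ≤ y := by positivity
    omega
  have : (x:ℤ) = y := by linarith
  exact_mod_cast this

lemma rho_mod (t : ℕ) : auxM a b c K t % a = auxRho a b t := by
  have h1 : (a:ℤ) ∣ (auxM a b c K t : ℤ) - auxRho a b t := by
    have h2 := dvd_add (H.auxM_dvd t) (H.rho_dvd t)
    have h3 : ((auxM a b c K t : ℤ) - t * b) + ((t:ℤ) * b - auxRho a b t)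
        = (auxM a b c K t : ℤ) - auxRho a b t := by ring
    rwa [h3] at h2
  have hme : auxRho a b t ≡ auxM a b c K t [MOD a] := (Nat.modEq_iff_dvd).mpr h1
  unfold Nat.ModEq at hme
  rw [Nat.mod_eq_of_lt (H.rho_lt t)] at hme
  omega

lemma rho_le_M (t : ℕ) : auxRho a b t ≤ auxM a b c K t := by
  have := H.rho_mod t
  have := Nat.mod_le (auxM a b c K t) a
  omega

lemma cnt_eq (t : ℕ) : auxM a b c K t = auxRho a b t + auxCnt a b c K t * a := by
  have hle := H.rho_le_M t
  have hmod := H.rho_mod t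
  have hdvd : a ∣ auxM a b c K t - auxRho a b t := by
    have h := Nat.div_add_mod (auxM a b c K t) a
    refine ⟨auxM a b c K t / a, ?_⟩
    omega
  have h2 := Nat.div_mul_cancel hdvd
  rw [auxCnt]
  omega

lemma rho_inj (t t' : ℕ) (ht : t < a) (ht' : t' < a)
    (h : auxRho a b t = auxRho a b t') : t = t' := by
  refine H.class_uniq t t' ht ht' ?_
  obtain ⟨d1, hd1⟩ := H.rho_dvd t
  obtain ⟨d2, hd2⟩ := H.rho_dvd t'
  refine ⟨d1 - d2, ?_⟩
  have hc : ((auxRho a b t : ℕ) : ℤ) = ((auxRho a b t' : ℕ) : ℤ) := by exact_mod_cast h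
  linear_combination hd1 - hd2 + hc

lemma set_eq : {n : ℕ | repCount a b c (n:ℤ) ≤ 1} = ↑(auxBlocks a b c K) := by
  ext n
  obtain ⟨t, ht, hd⟩ := H.class_ex n
  have hmodn : n % a = auxRho a b t := by
    have h1 : (a:ℤ) ∣ (n : ℤ) - auxRho a b t := by
      obtain ⟨d1, hd1⟩ := hd
      obtain ⟨d2, hd2⟩ := H.rho_dvd t
      exact ⟨d1 + d2, by linear_combination hd1 + hd2⟩
    have hme : auxRho a b t ≡ n [MOD a] := (Nat.modEq_iff_dvd).mpr h1
    unfold Nat.ModEq at hme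
    rw [Nat.mod_eq_of_lt (H.rho_lt t)] at hme
    omega
  have hsplit : n / a * a + n % a = n := Nat.div_add_mod' n a
  have hcnt := H.cnt_eq t
  simp only [Set.mem_setOf_eq, Finset.coe_biUnion, Set.mem_iUnion, Finset.mem_coe,
    Finset.mem_range, auxBlocks, Finset.mem_biUnion, Finset.mem_image]
  rw [H.threshold n t ht hd]
  constructor
  · intro hlt
    refine ⟨t, ht, n / a, ?_, by omega⟩
    by_contra hc
    push_neg at hc
    have h6 : auxCnt a b c K t * a ≤ n / a * a := Nat.mul_le_mul_right a hc
    omega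
  · rintro ⟨t', ht', j, hj, rfl⟩
    have hteq : t' = t := by
      refine H.class_uniq t' t ht' ht ?_
      obtain ⟨d1, hd1⟩ := hd
      obtain ⟨d2, hd2⟩ := H.rho_dvd t'
      refine ⟨d1 + d2 - j, ?_⟩
      push_cast at hd1 ⊢
      linear_combination hd1 + hd2
    subst hteq
    have h6 : (j + 1) * a ≤ auxCnt a b c K t' * a := Nat.mul_le_mul_right a hj
    have h7 : j * a + a = (j + 1) * a := by ring
    omega

lemma card_blocks : (auxBlocks a b c K).card = ∑ t ∈ range a, auxCnt a b c K t := by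
  rw [auxBlocks, Finset.card_biUnion]
  · refine Finset.sum_congr rfl fun t _ => ?_
    rw [Finset.card_image_of_injective _ ?_, Finset.card_range]
    intro j j' hEq
    have := Nat.add_left_cancel hEq
    exact Nat.eq_of_mul_eq_mul_right H.ha0 this
  · intro t ht t' ht' hne
    rw [Function.onFun, Finset.disjoint_left]
    intro n hn hn'
    rw [Finset.mem_image] at hn hn'
    obtain ⟨j, hj, hjn⟩ := hn
    obtain ⟨j', hj', hjn'⟩ := hn'
    apply hne
    refine H.rho_inj t t' (Finset.mem_range.mp ht) (Finset.mem_range.mp ht') ?_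
    refine H.small_eq _ _ (H.rho_lt t) (H.rho_lt t') ⟨(j':ℤ) - j, ?_⟩
    have h1 : ((auxRho a b t + j * a : ℕ) : ℤ) = ((auxRho a b t' + j' * a : ℕ) : ℤ) := by
      exact_mod_cast hjn.trans hjn'.symm
    push_cast at h1
    linear_combination h1

lemma count_eq :
    (Nat.card {n : ℕ | repCount a b c (n:ℤ) ≤ 1}) = ∑ t ∈ range a, auxCnt a b c K t := by
  rw [Nat.card_coe_set_eq, H.set_eq, Set.ncard_coe_finset, H.card_blocks]

lemma sum_rho : ∑ t ∈ range a, auxRho a b t = ∑ t ∈ range a, t := by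
  have hinj : ∀ x ∈ range a, ∀ y ∈ range a, auxRho a b x = auxRho a b y → x = y := by
    intro x hx y hy hEq
    exact H.rho_inj x y (Finset.mem_range.mp hx) (Finset.mem_range.mp hy) hEq
  have himg : Finset.image (auxRho a b) (range a) = range a := by
    apply Finset.eq_of_subset_of_card_le
    · intro x hx
      rw [Finset.mem_image] at hx
      obtain ⟨t, _, rfl⟩ := hx
      exact Finset.mem_range.mpr (H.rho_lt t)
    · rw [Finset.card_range, Finset.card_image_of_injOn hinj, Finset.card_range]
  have h8 : ∑ x ∈ Finset.image (auxRho a b) (range a), (fun x => x) x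
      = ∑ x ∈ range a, (fun x => x) (auxRho a b x) := Finset.sum_image hinj
  simp only at h8
  conv_rhs => rw [← himg]
  exact h8.symm

lemma sum_M : ∑ t ∈ range a, (auxM a b c K t : ℤ) =
    b * (∑ t ∈ range a, (t:ℤ)) + K * ((a:ℤ) * b)
      - (e:ℤ) * a * (∑ t ∈ range a, ((t / K : ℕ) : ℤ)) - (e:ℤ) * a * K := by
  have hKa := H.hKa
  have hsplit := Finset.sum_range_add_sum_Ico (fun t => (auxM a b c K t : ℤ)) hKa.le
  have hsplit2 := Finset.sum_range_add_sum_Ico (fun t => ((t:ℕ) : ℤ)) hKa.le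
  have hsplit3 := Finset.sum_range_add_sum_Ico (fun t => ((t / K : ℕ) : ℤ)) hKa.le
  have hGK : ∑ t ∈ range K, ((t / K : ℕ) : ℤ) = 0 := by
    refine Finset.sum_eq_zero fun t ht => ?_
    rw [Nat.div_eq_of_lt (Finset.mem_range.mp ht)]
    rfl
  have hW : (∑ t ∈ range K, (((t + a) / K : ℕ) : ℤ)) = (a:ℤ) := by
    have h2 : ∑ t ∈ range K, ((t + a) / K) = a := by
      have h3 : ∀ t ∈ range K, (t + a) / K = (a + t) / K := fun t _ => by rw [Nat.add_comm]
      rw [Finset.sum_congr rfl h3]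
      exact aux_sumW K H.hK0 a
    exact_mod_cast congrArg (Nat.cast : ℕ → ℤ) h2
  have hlow : ∑ t ∈ range K, (auxM a b c K t : ℤ) =
      b * (∑ t ∈ range K, (t:ℤ)) + K * ((a:ℤ) * b) - (e:ℤ) * a * a := by
    have h1 : ∀ t ∈ range K, (auxM a b c K t : ℤ) =
        (t : ℤ) * b + (a:ℤ) * b - (((t + a) / K : ℕ) : ℤ) * ((e:ℤ) * a) := by
      intro t ht
      have h5 : t < K := Finset.mem_range.mp ht
      rw [H.auxM_val t, if_neg (by omega)]
    rw [Finset.sum_congr rfl h1]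
    simp only [Finset.sum_sub_distrib, Finset.sum_add_distrib, ← Finset.sum_mul,
      Finset.sum_const, Finset.card_range, nsmul_eq_mul]
    rw [hW]
    ring
  have hhigh : ∑ t ∈ Ico K a, (auxM a b c K t : ℤ) =
      b * (∑ t ∈ Ico K a, (t:ℤ))
        - ((∑ t ∈ Ico K a, ((t / K : ℕ) : ℤ)) - ((a - K : ℕ) : ℤ)) * ((e:ℤ) * a) := by
    have h1 : ∀ t ∈ Ico K a, (auxM a b c K t : ℤ) =
        (t : ℤ) * b - (((t / K : ℕ) : ℤ) - 1) * ((e:ℤ) * a) := fun t ht => by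
      rw [H.auxM_val t, if_pos (Finset.mem_Ico.mp ht).1]
    rw [Finset.sum_congr rfl h1]
    simp only [Finset.sum_sub_distrib, ← Finset.sum_mul, Finset.sum_const, Nat.card_Ico,
      nsmul_eq_mul, mul_one]
    ring
  have hcast : ((a - K : ℕ) : ℤ) = (a:ℤ) - K := by
    push_cast [Nat.cast_sub hKa.le]
    ring
  rw [hcast] at hhigh
  linear_combination (-1:ℤ) * hsplit + hlow + hhigh + (b:ℤ) * hsplit2
    + (-(e:ℤ)*(a:ℤ)) * hsplit3 + ((e:ℤ)*(a:ℤ)) * hGK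

theorem main_count : 2 * (a:ℤ) * (Nat.card {n : ℕ | repCount a b c (n:ℤ) ≤ 1} : ℤ) =
    ((a:ℤ) - 1) * a * b + 2*K*(a:ℤ)*b - (e:ℤ)*a*(K*r*((r:ℤ)-1) + 2*r*((a:ℤ) - r*K))
      - 2*(e:ℤ)*a*K - (a:ℤ)*((a:ℤ)-1) := by
  have hcnt : ∀ t ∈ range a, ((auxCnt a b c K t : ℕ) : ℤ) * a
      = (auxM a b c K t : ℤ) - (auxRho a b t : ℤ) := by
    intro t _
    have h1 := H.cnt_eq t
    have h2 : ((auxM a b c K t : ℕ) : ℤ) = (auxRho a b t : ℤ) + (auxCnt a b c K t : ℤ) * a := by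
      exact_mod_cast congrArg (Nat.cast : ℕ → ℤ) h1
    linarith
  have hsum : (∑ t ∈ range a, (auxCnt a b c K t : ℤ)) * a
      = (∑ t ∈ range a, (auxM a b c K t : ℤ)) - ∑ t ∈ range a, (auxRho a b t : ℤ) := by
    rw [Finset.sum_mul, ← Finset.sum_sub_distrib]
    exact Finset.sum_congr rfl hcnt
  have hrho : (∑ t ∈ range a, (auxRho a b t : ℤ)) = ∑ t ∈ range a, (t:ℤ) := by
    have h9 := congrArg (Nat.cast : ℕ → ℤ) H.sum_rho
    push_cast at h9
    exact h9
  have hT : 2 * (∑ t ∈ range a, (t:ℤ)) = (a:ℤ) * ((a:ℤ) - 1) := by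
    have h1 := congrArg (Nat.cast : ℕ → ℤ) (Finset.sum_range_id_mul_two a)
    have h2 : (1:ℕ) ≤ a := by have := H.ha2; omega
    push_cast [Nat.cast_sub h2] at h1
    linarith
  have hrKa : r * K ≤ a := by have := H.hrKa; have := H.ha2; omega
  have hsK : a - r * K ≤ K := by
    have h5 := H.haK
    have h6 : (r + 1) * K = r * K + K := by ring
    omega
  have hG : 2 * (∑ t ∈ range a, ((t / K : ℕ) : ℤ))
      = (K:ℤ)*r*((r:ℤ)-1) + 2*r*((a:ℤ) - r*K) := by
    have h1 := aux_sumG K H.hK0 (a - r * K) hsK r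
    have h2 : r * K + (a - r * K) = a := by omega
    rw [h2] at h1
    have h3 := congrArg (Nat.cast : ℕ → ℤ) h1
    have h4 : ((2 * (∑ t ∈ range a, t / K) + K * r : ℕ) : ℤ)
        = 2 * (∑ t ∈ range a, ((t / K : ℕ) : ℤ)) + (K:ℤ) * r := by
      rw [Nat.cast_add, Nat.cast_mul, Nat.cast_mul, Nat.cast_sum]
      norm_num
    have h5 : ((K * r * r + 2 * r * (a - r * K) : ℕ) : ℤ)
        = (K:ℤ) * r * r + 2 * (r:ℤ) * ((a:ℤ) - (r:ℤ) * K) := by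
      push_cast [Nat.cast_sub hrKa]
      ring
    rw [h4, h5] at h3
    linarith
  have hM := H.sum_M
  have hcount := H.count_eq
  have hNat : (Nat.card {n : ℕ | repCount a b c (n:ℤ) ≤ 1} : ℤ)
      = ∑ t ∈ range a, (auxCnt a b c K t : ℤ) := by
    rw [hcount]
    push_cast
    rfl
  rw [hNat]
  linear_combination 2*hsum + 2*hM + (-2:ℤ)*hrho + ((b:ℤ) - 1)*hT + (-(e:ℤ)*(a:ℤ))*hG

end AuxHyp

theorem stmt15 (i k : ℕ) (hi : 3 ≤ i) (hk : 3 ≤ k)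
    (hr : 1 ≤ (Nat.fib i - 1) / Nat.fib k) :
    letI F := Nat.fib
    letI r := (F i - 1) / F k
    (Nat.card {n : ℕ | repCount (F i) (F (i + 2)) (F (i + k)) (n : ℤ) ≤ 1} : ℚ) =
      (((F i : ℚ) + 2 * F k - 1) * F (i + 2) - F i + 1) / 2 -
        ((r : ℚ) * F i - ((r : ℚ) - 1) * ((r : ℚ) + 2) / 2 * F k) * F (k - 2) := by
  set a := Nat.fib i with ha
  set b := Nat.fib (i + 2) with hb
  set c := Nat.fib (i + k) with hc
  set K := Nat.fib k with hK
  set e := Nat.fib (k - 2) with he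
  set r := (a - 1) / K with hrdef
  -- Fibonacci identities
  have e2 : b = a + Nat.fib (i + 1) := by rw [hb, ha]; exact Nat.fib_add_two
  have e3 : K = e + Nat.fib (k - 1) := by
    rw [hK, he]
    have h := Nat.fib_add_two (n := k - 2)
    rw [show k - 2 + 2 = k by omega] at h
    rw [h, show k - 2 + 1 = k - 1 by omega]
  have e1 : c = a * Nat.fib (k - 1) + Nat.fib (i + 1) * K := by
    have h := Nat.fib_add i (k - 1)
    rw [show i + (k - 1) + 1 = i + k by omega, show k - 1 + 1 = k by omega] at h
    rw [hc, h, ha, hK]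
  have hmono := Nat.fib_mono
  have hfib1 : Nat.fib 1 = 1 := Nat.fib_one
  have hfib3 : Nat.fib 3 = 2 := by decide
  have ha2 : 2 ≤ a := by rw [ha, ← hfib3]; exact hmono hi
  have hK2 : 2 ≤ K := by rw [hK, ← hfib3]; exact hmono hk
  have he1 : 1 ≤ e := by rw [he, ← hfib1]; exact hmono (by omega)
  have hmono12 : e ≤ Nat.fib (k - 1) := by rw [he]; exact hmono (by omega)
  have h2eK : 2 * e ≤ K := by omega
  have hK0 : 0 < K := by omega
  have hKa : K < a := by
    have h1 := (Nat.one_le_div_iff hK0).mp hr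
    omega
  have hki : k ≤ i := by
    by_contra hc2
    push_neg at hc2
    have : a ≤ K := by rw [ha, hK]; exact hmono (by omega)
    omega
  have h2ea : 2 * e ≤ a := by
    have hia : a = Nat.fib (i - 2) + Nat.fib (i - 1) := by
      rw [ha]
      have h := Nat.fib_add_two (n := i - 2)
      rw [show i - 2 + 2 = i by omega] at h
      rw [h, show i - 2 + 1 = i - 1 by omega]
    have h1 : e ≤ Nat.fib (i - 2) := by rw [he]; exact hmono (by omega)
    have h2 : Nat.fib (i - 2) ≤ Nat.fib (i - 1) := hmono (by omega)
    omega
  have hba : 2 * a ≤ b := by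
    have h1 : a ≤ Nat.fib (i + 1) := hmono (by omega)
    omega
  have hrel : K * b = e * a + c := by rw [e1, e2, e3]; ring
  have hco : Nat.Coprime a b := by
    have h1 : Nat.Coprime a (Nat.fib (i + 1) + a) :=
      Nat.coprime_add_self_right.mpr (Nat.fib_coprime_fib_succ i)
    rw [e2, Nat.add_comm]
    exact h1
  have H : AuxHyp a b c K e r :=
    { hco := hco, hrel := hrel, ha2 := ha2, hK2 := hK2, he1 := he1, h2eK := h2eK,
      h2ea := h2ea, hba := hba, hKa := hKa, hrd := hrdef }
  have hmain := H.main_count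
  have hQ := congrArg (fun z : ℤ => (z : ℚ)) hmain
  push_cast at hQ
  have haQ : (0:ℚ) < (a:ℚ) := by exact_mod_cast (by omega : 0 < a)
  have h2a : (2 * (a:ℚ)) ≠ 0 := by positivity
  apply mul_left_cancel₀ h2a
  rw [show (2 * (a:ℚ)) * (Nat.card {n : ℕ | repCount a b c (n:ℤ) ≤ 1} : ℚ)
      = 2 * (a:ℚ) * (Nat.card {n : ℕ | repCount a b c (n:ℤ) ≤ 1} : ℚ) from by ring, hQ]
  ring
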